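/- Let p ≥ 2 and let T be a spider with p legs, each of length at least 2. Then min{ ν(T − e_1 − e_2) : e_1, e_2 distinct edges of T } ≤ min{ ν(T − e) : e an edge of T }, with equality if and only if T has exactly one leg of even length. -/

import Mathlib

open SimpleGraph Finset

/-- Number of colors used by an edge-coloring of the complete graph on `Fin n`. -/
noncomputable def colorCount {n : ℕ} (c : Sym2 (Fin n) → ℕ) : ℕ :=
  (c '' (⊤ : SimpleGraph (Fin n)).edgeSet).ncard

/-- The coloring `c` of `K_n` admits a rainbow copy of the graph `G`. -/
def HasRainbowCopy {α : Type*} {n : ℕ} (c : Sym2 (Fin n) → ℕ) (G : SimpleGraph α) : Prop :=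
  ∃ f : α → Fin n, Function.Injective f ∧
    ∀ e₁ ∈ G.edgeSet, ∀ e₂ ∈ G.edgeSet, e₁ ≠ e₂ → c (Sym2.map f e₁) ≠ c (Sym2.map f e₂)

/-- The anti-Ramsey number `ar(K_n, G)`: the maximum number of colors in an edge-coloring
of `K_n` with no rainbow copy of `G`. -/
noncomputable def antiRamsey (n : ℕ) {α : Type*} (G : SimpleGraph α) : ℕ :=
  sSup {m | ∃ c : Sym2 (Fin n) → ℕ, ¬ HasRainbowCopy c G ∧ colorCount c = m}

/-- The spider with `p` legs of lengths `l 0, …, l (p-1)`: `none` is the center, and the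
`i`-th leg is the path `center - (i,0) - (i,1) - ⋯ - (i, l i - 1)` (with `l i` edges). -/
def spider (p : ℕ) (l : Fin p → ℕ) : SimpleGraph (Option (Σ i : Fin p, Fin (l i))) where
  Adj u v :=
    (∃ a, u = none ∧ v = some a ∧ a.2.val = 0) ∨
    (∃ a, v = none ∧ u = some a ∧ a.2.val = 0) ∨
    (∃ a b, u = some a ∧ v = some b ∧ a.1 = b.1 ∧
      (a.2.val + 1 = b.2.val ∨ b.2.val + 1 = a.2.val))
  symm := by
    constructor
    rintro u v h
    rcases h with ⟨a, h1, h2, h3⟩ | ⟨a, h1, h2, h3⟩ | ⟨a, b, h1, h2, h3, h4⟩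
    · exact Or.inr (Or.inl ⟨a, h1, h2, h3⟩)
    · exact Or.inl ⟨a, h1, h2, h3⟩
    · exact Or.inr (Or.inr ⟨b, a, h2, h1, h3.symm, h4.symm⟩)
  loopless := by
    constructor
    rintro u h
    rcases h with ⟨a, h1, h2, h3⟩ | ⟨a, h1, h2, h3⟩ | ⟨a, b, h1, h2, h3, h4⟩
    · rw [h1] at h2; exact absurd h2 (by simp)
    · rw [h2] at h1; exact absurd h1 (by simp)
    · rw [h1] at h2; injection h2 with h; subst h; omega

/-- `s` is a matching in `G`: a set of edges of `G` which pairwise share no vertex. -/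
def IsMatchingIn {V : Type*} (G : SimpleGraph V) (s : Finset (Sym2 V)) : Prop :=
  (∀ e ∈ s, e ∈ G.edgeSet) ∧
  ∀ e₁ ∈ s, ∀ e₂ ∈ s, e₁ ≠ e₂ → ∀ v, v ∈ e₁ → v ∉ e₂

/-- The matching number `ν(G)`: the maximum size of a matching in `G`. -/
noncomputable def matchingNumber {V : Type*} (G : SimpleGraph V) : ℕ :=
  sSup {m | ∃ s : Finset (Sym2 V), IsMatchingIn G s ∧ s.card = m}


namespace SpiderAux

variable {p : ℕ}

abbrev SpV (p : ℕ) (l : Fin p → ℕ) := Option (Σ i : Fin p, Fin (l i))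

def ev (l : Fin p → ℕ) (i : Fin p) (t : ℕ) : SpV p l :=
  if h : t < l i then some ⟨i, ⟨t, h⟩⟩ else none

lemma ev_ne_none {l : Fin p → ℕ} {i : Fin p} {t : ℕ} (h : t < l i) : ev l i t ≠ none := by
  simp [ev, h]

lemma ev_inj {l : Fin p → ℕ} {i i' : Fin p} {t t' : ℕ} (h : t < l i) (h' : t' < l i')
    (he : ev l i t = ev l i' t') : i = i' ∧ t = t' := by
  simp only [ev, dif_pos h, dif_pos h', Option.some.injEq] at he
  obtain ⟨hi, ht⟩ := Sigma.mk.inj_iff.mp he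
  subst hi
  exact ⟨rfl, by simpa using congrArg Fin.val (eq_of_heq ht)⟩

def edgeAt (l : Fin p → ℕ) (i : Fin p) (j : ℕ) : Sym2 (SpV p l) :=
  if j = 0 then s(none, ev l i 0) else s(ev l i (j-1), ev l i j)

lemma edgeAt_mem {l : Fin p → ℕ} {i : Fin p} {j : ℕ} (h : j < l i) :
    edgeAt l i j ∈ (spider p l).edgeSet := by
  rcases Nat.eq_zero_or_pos j with h0 | h0
  · subst h0
    simp only [edgeAt, if_pos rfl, SimpleGraph.mem_edgeSet]
    exact Or.inl ⟨⟨i, ⟨0, h⟩⟩, rfl, by simp [ev, h]⟩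
  · simp only [edgeAt, if_neg (Nat.pos_iff_ne_zero.mp h0), SimpleGraph.mem_edgeSet]
    refine Or.inr (Or.inr ⟨⟨i, ⟨j-1, by omega⟩⟩, ⟨i, ⟨j, h⟩⟩, ?_, ?_, rfl, ?_⟩)
    · simp [ev, show j - 1 < l i by omega]
    · simp [ev, h]
    · left; simp; omega

lemma edgeAt_classify {l : Fin p → ℕ} {e : Sym2 (SpV p l)} (h : e ∈ (spider p l).edgeSet) :
    ∃ i j, j < l i ∧ e = edgeAt l i j := by
  induction e using Sym2.inductionOn with
  | hf u v =>
    rw [SimpleGraph.mem_edgeSet] at h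
    rcases h with ⟨a, h1, h2, h3⟩ | ⟨a, h1, h2, h3⟩ | ⟨a, b, h1, h2, h3, h4⟩
    · obtain ⟨i, a2⟩ := a
      subst h1; subst h2
      simp only at h3
      refine ⟨i, 0, by omega, ?_⟩
      have : a2 = ⟨0, by omega⟩ := Fin.ext h3
      rw [this]
      simp [edgeAt, ev, show (0:ℕ) < l i by omega]
    · obtain ⟨i, a2⟩ := a
      subst h1; subst h2
      simp only at h3
      refine ⟨i, 0, by omega, ?_⟩
      have : a2 = ⟨0, by omega⟩ := Fin.ext h3
      rw [this, Sym2.eq_swap]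
      simp [edgeAt, ev, show (0:ℕ) < l i by omega]
    · obtain ⟨i, a2⟩ := a
      obtain ⟨i', b2⟩ := b
      subst h1; subst h2
      simp only at h3
      subst h3
      simp only at h4
      rcases h4 with h4 | h4
      · refine ⟨i, b2.val, b2.isLt, ?_⟩
        have hb0 : (b2 : ℕ) ≠ 0 := by omega
        simp only [edgeAt, if_neg hb0, ev, dif_pos (show (b2:ℕ) - 1 < l i by omega),
          dif_pos b2.isLt]
        have h1 : a2 = ⟨(b2:ℕ) - 1, by omega⟩ := Fin.ext (show a2.val = (b2:ℕ)-1 by omega)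
        exact congrArg (fun x : Fin (l i) => s((some ⟨i, x⟩ : SpV p l), (some ⟨i, b2⟩ : SpV p l))) h1
      · refine ⟨i, a2.val, a2.isLt, ?_⟩
        have ha0 : (a2 : ℕ) ≠ 0 := by omega
        rw [Sym2.eq_swap]
        simp only [edgeAt, if_neg ha0, ev, dif_pos (show (a2:ℕ) - 1 < l i by omega),
          dif_pos a2.isLt]
        have h1 : b2 = ⟨(a2:ℕ) - 1, by omega⟩ := Fin.ext (show b2.val = (a2:ℕ)-1 by omega)
        exact congrArg (fun x : Fin (l i) => s((some ⟨i, x⟩ : SpV p l), (some ⟨i, a2⟩ : SpV p l))) h1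

lemma edgeAt_inj {l : Fin p → ℕ} {i i' : Fin p} {j j' : ℕ} (h : j < l i) (h' : j' < l i')
    (he : edgeAt l i j = edgeAt l i' j') : i = i' ∧ j = j' := by
  unfold edgeAt at he
  split_ifs at he with h0 h0' h0'
  · subst h0; subst h0'
    rw [Sym2.eq_iff] at he
    rcases he with ⟨-, h2⟩ | ⟨h1, -⟩
    · exact ⟨(ev_inj h h' h2).1, rfl⟩
    · exact absurd h1.symm (ev_ne_none h')
  · rw [Sym2.eq_iff] at he
    rcases he with ⟨h1, -⟩ | ⟨h1, -⟩
    · exact absurd h1.symm (ev_ne_none (show j' - 1 < l i' by omega))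
    · exact absurd h1.symm (ev_ne_none h')
  · rw [Sym2.eq_iff] at he
    rcases he with ⟨h1, -⟩ | ⟨-, h2⟩
    · exact absurd h1 (ev_ne_none (by omega))
    · exact absurd h2 (ev_ne_none (by omega))
  · rw [Sym2.eq_iff] at he
    rcases he with ⟨h1, h2⟩ | ⟨h1, h2⟩
    · obtain ⟨hi, ht⟩ := ev_inj (show j - 1 < l i by omega) (show j' - 1 < l i' by omega) h1
      obtain ⟨-, ht'⟩ := ev_inj h h' h2
      exact ⟨hi, ht'⟩
    · obtain ⟨hi, ht⟩ := ev_inj (show j - 1 < l i by omega) h' h1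
      obtain ⟨-, ht'⟩ := ev_inj h (show j' - 1 < l i' by omega) h2
      exact ⟨hi, by omega⟩

lemma mem_edgeAt {l : Fin p → ℕ} {i : Fin p} {j : ℕ} {v : SpV p l} (hv : v ∈ edgeAt l i j) :
    (j = 0 ∧ (v = none ∨ v = ev l i 0)) ∨ (j ≠ 0 ∧ (v = ev l i (j-1) ∨ v = ev l i j)) := by
  unfold edgeAt at hv
  split_ifs at hv with h0
  · rw [Sym2.mem_iff] at hv
    exact Or.inl ⟨h0, hv⟩
  · rw [Sym2.mem_iff] at hv
    exact Or.inr ⟨h0, hv⟩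

section MN
variable {V : Type*} [Fintype V] [DecidableEq V]
set_option linter.unusedSectionVars false

lemma le_matchingNumber {G : SimpleGraph V} {s : Finset (Sym2 V)} (h : IsMatchingIn G s) :
    s.card ≤ matchingNumber G := by
  apply le_csSup
  · refine ⟨Fintype.card (Sym2 V), ?_⟩
    rintro m ⟨t, -, rfl⟩
    exact Finset.card_le_univ t |>.trans (le_of_eq (Finset.card_univ))
  · exact ⟨s, h, rfl⟩

lemma empty_isMatchingIn (G : SimpleGraph V) : IsMatchingIn G (∅ : Finset (Sym2 V)) :=
  ⟨fun e he => absurd he (Finset.notMem_empty e),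
   fun e he => absurd he (Finset.notMem_empty e)⟩

lemma matchingNumber_le_cover [Inhabited V] {G : SimpleGraph V} (C : Finset V)
    (hC : ∀ e ∈ G.edgeSet, ∃ v ∈ C, v ∈ e) : matchingNumber G ≤ C.card := by
  rw [matchingNumber]
  apply csSup_le
  · exact ⟨0, ∅, empty_isMatchingIn G, rfl⟩
  rintro m ⟨s, ⟨hs1, hs2⟩, rfl⟩
  classical
  set f : Sym2 V → V := fun e => if h : ∃ v ∈ C, v ∈ e then h.choose else default with hf
  apply Finset.card_le_card_of_injOn f
  · intro e he
    have h : ∃ v ∈ C, v ∈ e := hC e (hs1 e he)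
    simp only [hf, dif_pos h]
    exact h.choose_spec.1
  · intro e₁ he₁ e₂ he₂ hfe
    by_contra hne
    have h1 : ∃ v ∈ C, v ∈ e₁ := hC e₁ (hs1 e₁ he₁)
    have h2 : ∃ v ∈ C, v ∈ e₂ := hC e₂ (hs1 e₂ he₂)
    simp only [hf, dif_pos h1, dif_pos h2] at hfe
    have hv1 : h1.choose ∈ e₁ := h1.choose_spec.2
    have hv2 : h2.choose ∈ e₂ := h2.choose_spec.2
    rw [hfe] at hv1
    exact hs2 e₁ he₁ e₂ he₂ hne _ hv1 hv2

end MN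

/-- The segment pattern: edges `(s+2k, s+2k+1)` for `k < m/2`. -/
def segPat (s m : ℕ) : Finset ℕ := (Finset.range (m/2)).image (fun k => s + 2*k)

lemma mem_segPat {s m t : ℕ} : t ∈ segPat s m ↔ ∃ k, k < m/2 ∧ t = s + 2*k := by
  simp [segPat, eq_comm]

lemma card_segPat (s m : ℕ) : (segPat s m).card = m/2 := by
  rw [segPat, Finset.card_image_of_injective _ (fun a b hab => by omega), Finset.card_range]


lemma mem_edgeAt_internal {l : Fin p → ℕ} {i : Fin p} {t : ℕ} (ht : t + 1 < l i)
    {v : SpV p l} (hv : v ∈ edgeAt l i (t+1)) : v = ev l i t ∨ v = ev l i (t+1) := by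
  rcases mem_edgeAt hv with ⟨h0, -⟩ | ⟨-, hv⟩
  · omega
  · simpa using hv

lemma pattern_matching (l : Fin p → ℕ) (D : Set (Sym2 (SpV p l)))
    (c : Option (Fin p)) (P : Fin p → Finset ℕ)
    (h1 : ∀ i, ∀ t ∈ P i, t + 1 < l i)
    (h2 : ∀ i, ∀ t ∈ P i, ∀ t' ∈ P i, t ≠ t' → t + 2 ≤ t' ∨ t' + 2 ≤ t)
    (h3 : ∀ i, ∀ t ∈ P i, edgeAt l i (t+1) ∉ D)
    (h4 : ∀ i₀ ∈ c, edgeAt l i₀ 0 ∉ D ∧ 0 ∉ P i₀ ∧ 0 < l i₀) :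
    (c.elim 0 fun _ => 1) + ∑ i, (P i).card ≤
      matchingNumber ((spider p l).deleteEdges D) := by
  classical
  set B : Finset (Sym2 (SpV p l)) :=
    Finset.univ.biUnion (fun i => (P i).image fun t => edgeAt l i (t+1)) with hB
  set cs : Finset (Sym2 (SpV p l)) := c.elim ∅ (fun i₀ => {edgeAt l i₀ 0}) with hcs
  -- characterization of members of B
  have memB : ∀ e, e ∈ B ↔ ∃ i, ∃ t ∈ P i, e = edgeAt l i (t+1) := by
    intro e
    simp only [hB, Finset.mem_biUnion, Finset.mem_univ, true_and, Finset.mem_image]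
    constructor
    · rintro ⟨i, t, ht, rfl⟩; exact ⟨i, t, ht, rfl⟩
    · rintro ⟨i, t, ht, rfl⟩; exact ⟨i, t, ht, rfl⟩
  have hBcard : B.card = ∑ i, (P i).card := by
    rw [hB, Finset.card_biUnion]
    · apply Finset.sum_congr rfl
      intro i _
      apply Finset.card_image_of_injOn
      intro t ht t' ht' he
      have := edgeAt_inj (h1 i t ht) (h1 i t' ht') he
      omega
    · intro i _ i' _ hii'
      rw [Function.onFun, Finset.disjoint_left]
      rintro e he he'
      obtain ⟨t, ht, rfl⟩ := Finset.mem_image.mp he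
      obtain ⟨t', ht', he'⟩ := Finset.mem_image.mp he'
      exact hii' (edgeAt_inj (h1 i t ht) (h1 i' t' ht') he'.symm).1
  have hdisj : Disjoint cs B := by
    rw [Finset.disjoint_left]
    intro e he heB
    obtain ⟨i, t, ht, rfl⟩ := (memB e).mp heB
    rcases c with _ | i₀
    · simp [hcs] at he
    · simp only [hcs, Option.elim, Finset.mem_singleton] at he
      obtain ⟨h0, -⟩ := h4 i₀ rfl
      have := edgeAt_inj (h1 i t ht) ((h4 i₀ rfl).2.2) he
      omega
  have hcscard : cs.card = c.elim 0 fun _ => 1 := by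
    rcases c with _ | i₀ <;> simp [hcs]
  have hM : IsMatchingIn ((spider p l).deleteEdges D) (cs ∪ B) := by
    constructor
    · intro e he
      rw [SimpleGraph.edgeSet_deleteEdges, Set.mem_diff]
      rcases Finset.mem_union.mp he with he | he
      · rcases c with _ | i₀
        · simp [hcs] at he
        · simp only [hcs, Option.elim, Finset.mem_singleton] at he
          subst he
          exact ⟨edgeAt_mem (h4 i₀ rfl).2.2, (h4 i₀ rfl).1⟩
      · obtain ⟨i, t, ht, rfl⟩ := (memB e).mp he
        exact ⟨edgeAt_mem (h1 i t ht), h3 i t ht⟩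
    · intro e₁ he₁ e₂ he₂ hne v hv1 hv2
      -- derive contradiction
      have key : ∀ e ∈ cs ∪ B, ∀ w, w ∈ e →
          (∃ i₀, c = some i₀ ∧ e = edgeAt l i₀ 0 ∧ (w = none ∨ w = ev l i₀ 0)) ∨
          (∃ i, ∃ t ∈ P i, e = edgeAt l i (t+1) ∧ (w = ev l i t ∨ w = ev l i (t+1))) := by
        intro e he w hw
        rcases Finset.mem_union.mp he with he | he
        · rcases c with _ | i₀
          · simp [hcs] at he
          · simp only [hcs, Option.elim, Finset.mem_singleton] at he
            subst he
            left
            refine ⟨i₀, rfl, rfl, ?_⟩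
            rcases mem_edgeAt hw with ⟨-, hw⟩ | ⟨h0, -⟩
            · exact hw
            · omega
        · obtain ⟨i, t, ht, rfl⟩ := (memB e).mp he
          exact Or.inr ⟨i, t, ht, rfl, mem_edgeAt_internal (h1 i t ht) hw⟩
      rcases key e₁ he₁ v hv1 with ⟨i₀, hc, he, hv⟩ | ⟨i, t, ht, he, hv⟩ <;>
        rcases key e₂ he₂ v hv2 with ⟨i₀', hc', he', hv'⟩ | ⟨i', t', ht', he', hv'⟩
      · rw [hc] at hc'
        apply hne
        rw [he, he', Option.some_inj.mp hc']
      · obtain ⟨-, h0, hl0⟩ := h4 i₀ hc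
        rcases hv with rfl | hv
        · rcases hv' with hv' | hv'
          · exact ev_ne_none (show t' < l i' by have := h1 i' t' ht'; omega) hv'.symm
          · exact ev_ne_none (h1 i' t' ht') hv'.symm
        · rcases hv' with hv' | hv'
          · have := ev_inj hl0 (show t' < l i' by have := h1 i' t' ht'; omega) (hv.symm.trans hv')
            obtain ⟨rfl, rfl⟩ := this
            exact h0 ht'
          · have := ev_inj hl0 (h1 i' t' ht') (hv.symm.trans hv')
            omega
      · obtain ⟨-, h0, hl0⟩ := h4 i₀' hc'
        rcases hv' with rfl | hv'
        · rcases hv with hv | hv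
          · exact ev_ne_none (show t < l i by have := h1 i t ht; omega) hv.symm
          · exact ev_ne_none (h1 i t ht) hv.symm
        · rcases hv with hv | hv
          · have := ev_inj hl0 (show t < l i by have := h1 i t ht; omega) (hv'.symm.trans hv)
            obtain ⟨rfl, rfl⟩ := this
            exact h0 ht
          · have := ev_inj hl0 (h1 i t ht) (hv'.symm.trans hv)
            omega
      · have hti : t < l i := by have := h1 i t ht; omega
        have hti' : t' < l i' := by have := h1 i' t' ht'; omega
        have hii : i = i' := by
          rcases hv with hv | hv <;> rcases hv' with hv' | hv'
          · exact (ev_inj hti hti' (hv.symm.trans hv')).1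
          · exact (ev_inj hti (h1 i' t' ht') (hv.symm.trans hv')).1
          · exact (ev_inj (h1 i t ht) hti' (hv.symm.trans hv')).1
          · exact (ev_inj (h1 i t ht) (h1 i' t' ht') (hv.symm.trans hv')).1
        subst hii
        have htt : t ≠ t' := by
          rintro rfl
          exact hne (he.trans he'.symm)
        have hgap := h2 i t ht t' ht' htt
        rcases hv with hv | hv <;> rcases hv' with hv' | hv'
        · have := (ev_inj hti hti' (hv.symm.trans hv')).2; omega
        · have := (ev_inj hti (h1 i t' ht') (hv.symm.trans hv')).2; omega
        · have := (ev_inj (h1 i t ht) hti' (hv.symm.trans hv')).2; omega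
        · have := (ev_inj (h1 i t ht) (h1 i t' ht') (hv.symm.trans hv')).2; omega
  calc (c.elim 0 fun _ => 1) + ∑ i, (P i).card = (cs ∪ B).card := by
        rw [Finset.card_union_of_disjoint hdisj, hBcard, hcscard]
    _ ≤ _ := le_matchingNumber hM

lemma cover_bound (l : Fin p → ℕ) (D : Set (Sym2 (SpV p l))) (Q : Fin p → Finset ℕ)
    (hQ1 : ∀ i, ∀ t ∈ Q i, t < l i)
    (hQ2 : ∀ i j, 0 < j → j < l i → edgeAt l i j ∉ D → (j - 1 ∈ Q i ∨ j ∈ Q i)) :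
    matchingNumber ((spider p l).deleteEdges D) ≤ 1 + ∑ i, (Q i).card := by
  classical
  set C : Finset (SpV p l) :=
    {(none : SpV p l)} ∪ Finset.univ.biUnion (fun i => (Q i).image (ev l i)) with hC
  have hCcard : C.card = 1 + ∑ i, (Q i).card := by
    rw [hC, Finset.card_union_of_disjoint, Finset.card_singleton, Finset.card_biUnion]
    · congr 1
      apply Finset.sum_congr rfl
      intro i _
      apply Finset.card_image_of_injOn
      intro t ht t' ht' he
      exact (ev_inj (hQ1 i t ht) (hQ1 i t' ht') he).2
    · intro i _ i' _ hii'
      rw [Function.onFun, Finset.disjoint_left]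
      rintro e he he'
      obtain ⟨t, ht, rfl⟩ := Finset.mem_image.mp he
      obtain ⟨t', ht', he'⟩ := Finset.mem_image.mp he'
      exact hii' (ev_inj (hQ1 i t ht) (hQ1 i' t' ht') he'.symm).1
    · rw [Finset.disjoint_left]
      rintro e he he'
      rw [Finset.mem_singleton] at he
      subst he
      rw [Finset.mem_biUnion] at he'
      obtain ⟨i, -, he'⟩ := he'
      obtain ⟨t, ht, he'⟩ := Finset.mem_image.mp he'
      exact ev_ne_none (hQ1 i t ht) he'
  rw [← hCcard]
  apply matchingNumber_le_cover
  intro e he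
  rw [SimpleGraph.edgeSet_deleteEdges, Set.mem_diff] at he
  obtain ⟨i, j, hj, rfl⟩ := edgeAt_classify he.1
  rcases Nat.eq_zero_or_pos j with rfl | hj0
  · refine ⟨none, ?_, ?_⟩
    · simp [hC]
    · simp only [edgeAt, if_pos rfl]
      exact Sym2.mem_mk_left _ _
  · obtain ht | ht := hQ2 i j hj0 hj he.2
    · refine ⟨ev l i (j-1), ?_, ?_⟩
      · rw [hC, Finset.mem_union, Finset.mem_biUnion]
        exact Or.inr ⟨i, Finset.mem_univ i, Finset.mem_image_of_mem _ ht⟩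
      · simp only [edgeAt, if_neg (by omega : j ≠ 0)]
        exact Sym2.mem_mk_left _ _
    · refine ⟨ev l i j, ?_, ?_⟩
      · rw [hC, Finset.mem_union, Finset.mem_biUnion]
        exact Or.inr ⟨i, Finset.mem_univ i, Finset.mem_image_of_mem _ ht⟩
      · simp only [edgeAt, if_neg (by omega : j ≠ 0)]
        exact Sym2.mem_mk_right _ _

/-- Three-segment matching pattern for a leg. -/
def P3 (a j1 j2 L : ℕ) : Finset ℕ :=
  segPat a (j1 - a) ∪ segPat j1 (j2 - j1) ∪ segPat j2 (L - j2)

lemma mem_P3 {a j1 j2 L t : ℕ} (ha : a ≤ j1) (h12 : j1 ≤ j2) (h2L : j2 ≤ L)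
    (h : t ∈ P3 a j1 j2 L) :
    (a ≤ t ∧ t + 2 ≤ j1 ∧ (t - a) % 2 = 0) ∨ (j1 ≤ t ∧ t + 2 ≤ j2 ∧ (t - j1) % 2 = 0) ∨
      (j2 ≤ t ∧ t + 2 ≤ L ∧ (t - j2) % 2 = 0) := by
  simp only [P3, Finset.mem_union, mem_segPat] at h
  rcases h with (⟨k, hk, rfl⟩ | ⟨k, hk, rfl⟩) | ⟨k, hk, rfl⟩
  · exact Or.inl ⟨by omega, by omega, by omega⟩
  · exact Or.inr (Or.inl ⟨by omega, by omega, by omega⟩)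
  · exact Or.inr (Or.inr ⟨by omega, by omega, by omega⟩)

lemma card_P3 {a j1 j2 L : ℕ} (ha : a ≤ j1) (h12 : j1 ≤ j2) (h2L : j2 ≤ L) :
    (P3 a j1 j2 L).card = (j1 - a)/2 + (j2 - j1)/2 + (L - j2)/2 := by
  rw [P3, Finset.card_union_of_disjoint, Finset.card_union_of_disjoint,
    card_segPat, card_segPat, card_segPat]
  · rw [Finset.disjoint_left]
    rintro t ht ht'
    rw [mem_segPat] at ht ht'
    omega
  · rw [Finset.disjoint_left]
    rintro t ht ht'
    rw [Finset.mem_union, mem_segPat, mem_segPat] at ht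
    rw [mem_segPat] at ht'
    omega

/-- Master lower bound: construct a matching from per-leg 3-segment patterns. -/
lemma master_lb (l : Fin p → ℕ) (D : Set (Sym2 (SpV p l))) (c : Option (Fin p))
    (a j1 j2 : Fin p → ℕ)
    (ha : ∀ i, a i ≤ j1 i) (h12 : ∀ i, j1 i ≤ j2 i) (h2L : ∀ i, j2 i ≤ l i)
    (hcA : ∀ i₀ ∈ c, edgeAt l i₀ 0 ∉ D ∧ 1 ≤ a i₀ ∧ 0 < l i₀)
    (hpos : ∀ i j, a i < j → j < l i → j ≠ j1 i → j ≠ j2 i → edgeAt l i j ∉ D) :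
    (c.elim 0 fun _ => 1) +
      ∑ i, ((j1 i - a i)/2 + (j2 i - j1 i)/2 + (l i - j2 i)/2) ≤
      matchingNumber ((spider p l).deleteEdges D) := by
  have := pattern_matching l D c (fun i => P3 (a i) (j1 i) (j2 i) (l i))
    (fun i t ht => by
      have e1 := ha i; have e2 := h12 i; have e3 := h2L i
      rcases mem_P3 (ha i) (h12 i) (h2L i) ht with h | h | h <;> omega)
    (fun i t ht t' ht' hne => by
      have e1 := ha i; have e2 := h12 i; have e3 := h2L i
      rcases mem_P3 (ha i) (h12 i) (h2L i) ht with h | h | h <;>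
        rcases mem_P3 (ha i) (h12 i) (h2L i) ht' with h' | h' | h' <;> omega)
    (fun i t ht => by
      have e1 := ha i; have e2 := h12 i; have e3 := h2L i
      rcases mem_P3 (ha i) (h12 i) (h2L i) ht with h | h | h <;>
        exact hpos i (t+1) (by omega) (by omega) (by omega) (by omega))
    (fun i₀ hi₀ => by
      refine ⟨(hcA i₀ hi₀).1, ?_, (hcA i₀ hi₀).2.2⟩
      intro h0
      have e1 := ha i₀; have e2 := h12 i₀; have e3 := h2L i₀
      have e4 := (hcA i₀ hi₀).2.1
      rcases mem_P3 (ha i₀) (h12 i₀) (h2L i₀) h0 with h | h | h <;> omega)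
  refine le_trans (le_of_eq ?_) this
  congr 1
  exact Finset.sum_congr rfl fun i _ => (card_P3 (ha i) (h12 i) (h2L i)).symm

/-- Shifted cover pattern for a leg. -/
def cvP (s L : ℕ) : Finset ℕ := (Finset.range ((L + 1 - s)/2)).image (fun k => s + 2*k)

lemma mem_cvP {s L t : ℕ} : t ∈ cvP s L ↔ ∃ k, k < (L + 1 - s)/2 ∧ t = s + 2*k := by
  simp [cvP, eq_comm]

lemma card_cvP (s L : ℕ) : (cvP s L).card = (L + 1 - s)/2 := by
  rw [cvP, Finset.card_image_of_injective _ (fun x y hxy => by omega), Finset.card_range]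

/-- Master upper bound via a vertex cover with per-leg shifted patterns. -/
lemma master_ub (l : Fin p → ℕ) (D : Set (Sym2 (SpV p l))) (sft : Fin p → ℕ)
    (hs : ∀ i, 1 ≤ sft i)
    (hdel : ∀ i j, 0 < j → j < sft i → edgeAt l i j ∈ D) :
    matchingNumber ((spider p l).deleteEdges D) ≤ 1 + ∑ i, (l i + 1 - sft i)/2 := by
  have := cover_bound l D (fun i => cvP (sft i) (l i))
    (fun i t ht => by
      have e1 := hs i
      obtain ⟨k, hk, rfl⟩ := mem_cvP.mp ht; omega)
    (fun i j hj0 hjl hD => by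
      have e1 := hs i
      by_cases hjs : j < sft i
      · exact absurd (hdel i j hj0 hjs) hD
      · push_neg at hjs
        by_cases he : (j - sft i) % 2 = 0
        · right
          rw [mem_cvP]
          exact ⟨(j - sft i)/2, by omega, by omega⟩
        · left
          rw [mem_cvP]
          exact ⟨(j - sft i - 1)/2, by omega, by omega⟩)
  refine this.trans (le_of_eq ?_)
  congr 1
  exact Finset.sum_congr rfl fun i _ => card_cvP _ _

lemma sum_split (f : Fin p → ℕ) (a : Fin p) :
    ∑ i, f i = f a + ∑ i ∈ Finset.univ.erase a, f i :=
  (Finset.add_sum_erase _ f (Finset.mem_univ a)).symm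

lemma sum_split2 (f : Fin p → ℕ) {a b : Fin p} (hab : a ≠ b) :
    ∑ i, f i = f a + f b + ∑ i ∈ (Finset.univ.erase a).erase b, f i := by
  rw [sum_split f a, ← Finset.add_sum_erase _ f
    (show b ∈ Finset.univ.erase a by simp [hab.symm]), ← add_assoc]

lemma L1 (l : Fin p → ℕ) (hl : ∀ i, 2 ≤ l i) (i₁ : Fin p) (p₁ : ℕ) (hp₁ : p₁ < l i₁) :
    ∑ i, l i / 2 ≤
      matchingNumber ((spider p l).deleteEdges {edgeAt l i₁ p₁}) := by
  by_cases hodd : p₁ % 2 = 1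
  · refine le_trans ?_ (master_lb l {edgeAt l i₁ p₁} (some i₁)
      (fun k => if k = i₁ then 1 else 0)
      (fun k => if k = i₁ then p₁ else l k)
      (fun k => l k)
      (fun k => by split_ifs with h <;> [omega; exact Nat.zero_le _])
      (fun k => by split_ifs with h <;> [exact h ▸ le_of_lt hp₁; exact le_refl _])
      (fun k => le_refl _)
      (fun i₀ hi₀ => by
        cases hi₀
        refine ⟨?_, by simp, by omega⟩
        intro hD
        have := edgeAt_inj (show 0 < l i₁ by omega) hp₁ (Set.mem_singleton_iff.mp hD)
        omega)
      (fun i j haj hjl hj1 hj2 hD => by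
        have := edgeAt_inj hjl hp₁ (Set.mem_singleton_iff.mp hD)
        obtain ⟨rfl, rfl⟩ := this
        simp at hj1))
    simp only [Option.elim]
    rw [sum_split (fun i => l i / 2) i₁, sum_split _ i₁]
    have hco : ∀ k ∈ Finset.univ.erase i₁,
        ((if k = i₁ then (p₁ : ℕ) else l k) - (if k = i₁ then 1 else 0))/2 +
          ((l k) - (if k = i₁ then p₁ else l k))/2 + (l k - l k)/2 = l k / 2 := by
      intro k hk
      have : k ≠ i₁ := (Finset.mem_erase.mp hk).1
      simp [this]
    rw [Finset.sum_congr rfl hco]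
    simp only [if_true, eq_self_iff_true]
    omega
  · refine le_trans ?_ (master_lb l {edgeAt l i₁ p₁} none
      (fun _ => 0)
      (fun k => if k = i₁ then p₁ else l k)
      (fun k => l k)
      (fun k => Nat.zero_le _)
      (fun k => by split_ifs with h <;> [exact h ▸ le_of_lt hp₁; exact le_refl _])
      (fun k => le_refl _)
      (fun i₀ hi₀ => by simp at hi₀)
      (fun i j haj hjl hj1 hj2 hD => by
        have := edgeAt_inj hjl hp₁ (Set.mem_singleton_iff.mp hD)
        obtain ⟨rfl, rfl⟩ := this
        simp at hj1))
    simp only [Option.elim]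
    rw [sum_split (fun i => l i / 2) i₁, sum_split _ i₁]
    have hco : ∀ k ∈ Finset.univ.erase i₁,
        ((if k = i₁ then (p₁ : ℕ) else l k) - 0)/2 +
          ((l k) - (if k = i₁ then p₁ else l k))/2 + (l k - l k)/2 = l k / 2 := by
      intro k hk
      have : k ≠ i₁ := (Finset.mem_erase.mp hk).1
      simp [this]
    rw [Finset.sum_congr rfl hco]
    simp only [if_true, eq_self_iff_true]
    omega

lemma L1' (hp : 2 ≤ p) (l : Fin p → ℕ) (hl : ∀ i, 2 ≤ l i) (hlodd : ∀ i, l i % 2 = 1)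
    (i₁ : Fin p) (p₁ : ℕ) (hp₁ : p₁ < l i₁) :
    (∑ i, l i / 2) + 1 ≤
      matchingNumber ((spider p l).deleteEdges {edgeAt l i₁ p₁}) := by
  by_cases hodd : p₁ % 2 = 1
  · refine le_trans ?_ (master_lb l {edgeAt l i₁ p₁} (some i₁)
      (fun k => if k = i₁ then 1 else 0)
      (fun k => if k = i₁ then p₁ else l k)
      (fun k => l k)
      (fun k => by split_ifs with h <;> [omega; exact Nat.zero_le _])
      (fun k => by split_ifs with h <;> [exact h ▸ le_of_lt hp₁; exact le_refl _])
      (fun k => le_refl _)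
      (fun i₀ hi₀ => by
        cases hi₀
        refine ⟨?_, by simp, by omega⟩
        intro hD
        have := edgeAt_inj (show 0 < l i₁ by omega) hp₁ (Set.mem_singleton_iff.mp hD)
        omega)
      (fun i j haj hjl hj1 hj2 hD => by
        have := edgeAt_inj hjl hp₁ (Set.mem_singleton_iff.mp hD)
        obtain ⟨rfl, rfl⟩ := this
        simp at hj1))
    simp only [Option.elim]
    rw [sum_split (fun i => l i / 2) i₁, sum_split _ i₁]
    have hco : ∀ k ∈ Finset.univ.erase i₁,
        ((if k = i₁ then (p₁ : ℕ) else l k) - (if k = i₁ then 1 else 0))/2 +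
          ((l k) - (if k = i₁ then p₁ else l k))/2 + (l k - l k)/2 = l k / 2 := by
      intro k hk
      have : k ≠ i₁ := (Finset.mem_erase.mp hk).1
      simp [this]
    rw [Finset.sum_congr rfl hco]
    simp only [if_true, eq_self_iff_true]
    have := hlodd i₁
    omega
  · -- p₁ even, attach the center to another (odd) leg k₀
    have hk₀ : ∃ k₀ : Fin p, k₀ ≠ i₁ := by
      by_cases h : i₁ = ⟨0, by omega⟩
      · exact ⟨⟨1, by omega⟩, by simp [h, Fin.ext_iff]⟩
      · exact ⟨⟨0, by omega⟩, fun hc => h hc.symm⟩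
    obtain ⟨k₀, hk₀⟩ := hk₀
    refine le_trans ?_ (master_lb l {edgeAt l i₁ p₁} (some k₀)
      (fun k => if k = k₀ then 1 else 0)
      (fun k => if k = i₁ then p₁ else l k)
      (fun k => l k)
      (fun k => by
        split_ifs with h h' h''
        · exact absurd (h.symm.trans h') hk₀
        · have := hl k; omega
        · exact Nat.zero_le _
        · exact Nat.zero_le _)
      (fun k => by split_ifs with h <;> [exact h ▸ le_of_lt hp₁; exact le_refl _])
      (fun k => le_refl _)
      (fun i₀ hi₀ => by
        cases hi₀
        refine ⟨?_, by simp, by have := hl k₀; omega⟩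
        intro hD
        have := edgeAt_inj (show 0 < l k₀ by have := hl k₀; omega) hp₁
          (Set.mem_singleton_iff.mp hD)
        exact hk₀ this.1)
      (fun i j haj hjl hj1 hj2 hD => by
        have := edgeAt_inj hjl hp₁ (Set.mem_singleton_iff.mp hD)
        obtain ⟨rfl, rfl⟩ := this
        simp at hj1))
    simp only [Option.elim]
    rw [sum_split2 (fun i => l i / 2) hk₀.symm, sum_split2 _ hk₀.symm]
    have hco : ∀ k ∈ (Finset.univ.erase i₁).erase k₀,
        ((if k = i₁ then (p₁ : ℕ) else l k) - (if k = k₀ then 1 else 0))/2 +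
          ((l k) - (if k = i₁ then p₁ else l k))/2 + (l k - l k)/2 = l k / 2 := by
      intro k hk
      rw [Finset.mem_erase, Finset.mem_erase] at hk
      simp [hk.1, hk.2.1]
    rw [Finset.sum_congr rfl hco]
    simp only [if_true, eq_self_iff_true, if_neg hk₀, if_neg hk₀.symm]
    have h1 := hlodd i₁
    have h2 := hlodd k₀
    have h3 := hl k₀
    omega

lemma mem_pairD {l : Fin p → ℕ} {i i₁ i₂ : Fin p} {j p₁ p₂ : ℕ}
    (hjl : j < l i) (hp₁ : p₁ < l i₁) (hp₂ : p₂ < l i₂)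
    (hD : edgeAt l i j ∈ ({edgeAt l i₁ p₁, edgeAt l i₂ p₂} : Set (Sym2 (SpV p l)))) :
    (i = i₁ ∧ j = p₁) ∨ (i = i₂ ∧ j = p₂) := by
  simp only [Set.mem_insert_iff, Set.mem_singleton_iff] at hD
  rcases hD with hD | hD
  · exact Or.inl (edgeAt_inj hjl hp₁ hD)
  · exact Or.inr (edgeAt_inj hjl hp₂ hD)

lemma L2diff (l : Fin p → ℕ) (hl : ∀ i, 2 ≤ l i) {i₁ i₂ : Fin p} {p₁ p₂ : ℕ}
    (h12 : i₁ ≠ i₂) (hp₁ : p₁ < l i₁) (hp₂ : p₂ < l i₂)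
    (hee : l i₁ % 2 = 0 → l i₂ % 2 = 1) :
    ∑ i, l i / 2 ≤
      matchingNumber ((spider p l).deleteEdges {edgeAt l i₁ p₁, edgeAt l i₂ p₂}) := by
  by_cases hb1 : p₁ % 2 = 1 ∧ (l i₂ % 2 = 1 ∨ p₂ % 2 = 0)
  · refine le_trans ?_ (master_lb l _ (some i₁)
      (fun k => if k = i₁ then 1 else 0)
      (fun k => if k = i₁ then p₁ else if k = i₂ then p₂ else l k)
      (fun k => l k)
      (fun k => by split_ifs with h h' <;> [omega; exact Nat.zero_le _;
        exact Nat.zero_le _])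
      (fun k => by split_ifs with h h' <;>
        [exact h ▸ le_of_lt hp₁; exact h' ▸ le_of_lt hp₂; exact le_refl _])
      (fun k => le_refl _)
      (fun i₀ hi₀ => by
        cases hi₀
        refine ⟨?_, by simp, by omega⟩
        intro hDm
        rcases mem_pairD (show 0 < l i₁ by omega) hp₁ hp₂ hDm with ⟨-, h0⟩ | ⟨hi, -⟩
        · omega
        · exact h12 hi)
      (fun i j haj hjl hj1 hj2 hDm => by
        rcases mem_pairD hjl hp₁ hp₂ hDm with ⟨rfl, rfl⟩ | ⟨rfl, rfl⟩
        · rw [if_pos rfl] at hj1; exact hj1 rfl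
        · rw [if_neg (Ne.symm h12), if_pos rfl] at hj1; exact hj1 rfl))
    simp only [Option.elim]
    rw [sum_split2 (fun i => l i / 2) h12, sum_split2 _ h12]
    have hco : ∀ k ∈ (Finset.univ.erase i₁).erase i₂,
        ((if k = i₁ then (p₁:ℕ) else if k = i₂ then p₂ else l k) - (if k = i₁ then 1 else 0))/2 +
          ((l k) - (if k = i₁ then p₁ else if k = i₂ then p₂ else l k))/2 + (l k - l k)/2
          = l k / 2 := by
      intro k hk
      rw [Finset.mem_erase, Finset.mem_erase] at hk
      simp [hk.1, hk.2.1]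
    rw [Finset.sum_congr rfl hco]
    simp only [if_true, eq_self_iff_true, if_neg h12, if_neg (Ne.symm h12)]
    obtain ⟨hb1a, hb1b⟩ := hb1
    rcases hb1b with hb | hb <;> omega
  · by_cases hb2 : p₂ % 2 = 1
    · have hF : p₁ % 2 = 0 ∨ l i₁ % 2 = 1 := by
        by_cases hpp : p₁ % 2 = 0
        · exact Or.inl hpp
        · right
          have hl2 : l i₂ % 2 = 0 := by
            by_cases h2 : l i₂ % 2 = 1
            · exact absurd ⟨by omega, Or.inl h2⟩ hb1
            · omega
          by_cases h1 : l i₁ % 2 = 0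
          · exact absurd (hee h1) (by omega)
          · omega
      refine le_trans ?_ (master_lb l _ (some i₂)
        (fun k => if k = i₂ then 1 else 0)
        (fun k => if k = i₁ then p₁ else if k = i₂ then p₂ else l k)
        (fun k => l k)
        (fun k => by split_ifs with h h' <;>
          [exact absurd (h'.symm.trans h) h12; omega; exact Nat.zero_le _; exact Nat.zero_le _])
        (fun k => by split_ifs with h h' <;>
          [exact h ▸ le_of_lt hp₁; exact h' ▸ le_of_lt hp₂; exact le_refl _])
        (fun k => le_refl _)
        (fun i₀ hi₀ => by
          cases hi₀
          refine ⟨?_, by simp, by omega⟩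
          intro hDm
          rcases mem_pairD (show 0 < l i₂ by omega) hp₁ hp₂ hDm with ⟨hi, -⟩ | ⟨-, h0⟩
          · exact h12 hi.symm
          · omega)
        (fun i j haj hjl hj1 hj2 hDm => by
          rcases mem_pairD hjl hp₁ hp₂ hDm with ⟨rfl, rfl⟩ | ⟨rfl, rfl⟩
          · rw [if_pos rfl] at hj1; exact hj1 rfl
          · rw [if_neg (Ne.symm h12), if_pos rfl] at hj1; exact hj1 rfl))
      simp only [Option.elim]
      rw [sum_split2 (fun i => l i / 2) h12, sum_split2 _ h12]
      have hco : ∀ k ∈ (Finset.univ.erase i₁).erase i₂,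
          ((if k = i₁ then (p₁:ℕ) else if k = i₂ then p₂ else l k) - (if k = i₂ then 1 else 0))/2 +
            ((l k) - (if k = i₁ then p₁ else if k = i₂ then p₂ else l k))/2 + (l k - l k)/2
            = l k / 2 := by
        intro k hk
        rw [Finset.mem_erase, Finset.mem_erase] at hk
        simp [hk.1, hk.2.1]
      rw [Finset.sum_congr rfl hco]
      simp only [if_true, eq_self_iff_true, if_neg h12, if_neg (Ne.symm h12)]
      rcases hF with hb | hb <;> omega
    · have hF2 : p₂ % 2 = 0 := by omega
      have hF1 : p₁ % 2 = 0 := by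
        by_cases hpp : p₁ % 2 = 1
        · exact absurd ⟨hpp, Or.inr hF2⟩ hb1
        · omega
      refine le_trans ?_ (master_lb l _ none
        (fun k => 0)
        (fun k => if k = i₁ then p₁ else if k = i₂ then p₂ else l k)
        (fun k => l k)
        (fun k => Nat.zero_le _)
        (fun k => by split_ifs with h h' <;>
          [exact h ▸ le_of_lt hp₁; exact h' ▸ le_of_lt hp₂; exact le_refl _])
        (fun k => le_refl _)
        (fun i₀ hi₀ => by simp at hi₀)
        (fun i j haj hjl hj1 hj2 hDm => by
          rcases mem_pairD hjl hp₁ hp₂ hDm with ⟨rfl, rfl⟩ | ⟨rfl, rfl⟩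
          · rw [if_pos rfl] at hj1; exact hj1 rfl
          · rw [if_neg (Ne.symm h12), if_pos rfl] at hj1; exact hj1 rfl))
      simp only [Option.elim]
      rw [sum_split2 (fun i => l i / 2) h12, sum_split2 _ h12]
      have hco : ∀ k ∈ (Finset.univ.erase i₁).erase i₂,
          ((if k = i₁ then (p₁:ℕ) else if k = i₂ then p₂ else l k) - 0)/2 +
            ((l k) - (if k = i₁ then p₁ else if k = i₂ then p₂ else l k))/2 + (l k - l k)/2
            = l k / 2 := by
        intro k hk
        rw [Finset.mem_erase, Finset.mem_erase] at hk
        simp [hk.1, hk.2.1]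
      rw [Finset.sum_congr rfl hco]
      simp only [if_true, eq_self_iff_true, if_neg h12, if_neg (Ne.symm h12)]
      omega

lemma L2same (l : Fin p → ℕ) (hl : ∀ i, 2 ≤ l i) {i₁ : Fin p} {p₁ p₂ : ℕ}
    (hlt : p₁ < p₂) (hp₂ : p₂ < l i₁)
    (hcase : p₁ % 2 = 1 ∨ l i₁ % 2 = 1 ∨ ∃ k₀, k₀ ≠ i₁ ∧ l k₀ % 2 = 1) :
    ∑ i, l i / 2 ≤
      matchingNumber ((spider p l).deleteEdges {edgeAt l i₁ p₁, edgeAt l i₁ p₂}) := by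
  have hp₁ : p₁ < l i₁ := hlt.trans hp₂
  by_cases hb1 : p₁ % 2 = 1
  · refine le_trans ?_ (master_lb l _ (some i₁)
      (fun k => if k = i₁ then 1 else 0)
      (fun k => if k = i₁ then p₁ else l k)
      (fun k => if k = i₁ then p₂ else l k)
      (fun k => by split_ifs with h <;> [omega; exact Nat.zero_le _])
      (fun k => by split_ifs with h <;> [exact le_of_lt hlt; exact le_refl _])
      (fun k => by split_ifs with h <;> [exact h ▸ le_of_lt hp₂; exact le_refl _])
      (fun i₀ hi₀ => by
        cases hi₀
        refine ⟨?_, by simp, by omega⟩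
        intro hDm
        rcases mem_pairD (show 0 < l i₁ by omega) hp₁ hp₂ hDm with ⟨-, h0⟩ | ⟨-, h0⟩ <;> omega)
      (fun i j haj hjl hj1 hj2 hDm => by
        rcases mem_pairD hjl hp₁ hp₂ hDm with ⟨rfl, rfl⟩ | ⟨rfl, rfl⟩
        · rw [if_pos rfl] at hj1; exact hj1 rfl
        · rw [if_pos rfl] at hj2; exact hj2 rfl))
    simp only [Option.elim]
    rw [sum_split (fun i => l i / 2) i₁, sum_split _ i₁]
    have hco : ∀ k ∈ Finset.univ.erase i₁,
        ((if k = i₁ then (p₁:ℕ) else l k) - (if k = i₁ then 1 else 0))/2 +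
          ((if k = i₁ then (p₂:ℕ) else l k) - (if k = i₁ then p₁ else l k))/2 +
          (l k - (if k = i₁ then p₂ else l k))/2 = l k / 2 := by
      intro k hk
      simp [(Finset.mem_erase.mp hk).1]
    rw [Finset.sum_congr rfl hco]
    simp only [if_true, eq_self_iff_true]
    omega
  · by_cases hb2 : l i₁ % 2 = 1
    · refine le_trans ?_ (master_lb l _ none
        (fun k => 0)
        (fun k => if k = i₁ then p₁ else l k)
        (fun k => if k = i₁ then p₂ else l k)
        (fun k => Nat.zero_le _)
        (fun k => by split_ifs with h <;> [exact le_of_lt hlt; exact le_refl _])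
        (fun k => by split_ifs with h <;> [exact h ▸ le_of_lt hp₂; exact le_refl _])
        (fun i₀ hi₀ => by simp at hi₀)
        (fun i j haj hjl hj1 hj2 hDm => by
          rcases mem_pairD hjl hp₁ hp₂ hDm with ⟨rfl, rfl⟩ | ⟨rfl, rfl⟩
          · rw [if_pos rfl] at hj1; exact hj1 rfl
          · rw [if_pos rfl] at hj2; exact hj2 rfl))
      simp only [Option.elim]
      rw [sum_split (fun i => l i / 2) i₁, sum_split _ i₁]
      have hco : ∀ k ∈ Finset.univ.erase i₁,
          ((if k = i₁ then (p₁:ℕ) else l k) - 0)/2 +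
            ((if k = i₁ then (p₂:ℕ) else l k) - (if k = i₁ then p₁ else l k))/2 +
            (l k - (if k = i₁ then p₂ else l k))/2 = l k / 2 := by
        intro k hk
        simp [(Finset.mem_erase.mp hk).1]
      rw [Finset.sum_congr rfl hco]
      simp only [if_true, eq_self_iff_true]
      omega
    · have hodd : ∃ k₀, k₀ ≠ i₁ ∧ l k₀ % 2 = 1 := by
        rcases hcase with h | h | h <;> [omega; omega; exact h]
      obtain ⟨k₀, hk₀, hk₀odd⟩ := hodd
      refine le_trans ?_ (master_lb l _ (some k₀)
        (fun k => if k = k₀ then 1 else 0)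
        (fun k => if k = i₁ then p₁ else l k)
        (fun k => if k = i₁ then p₂ else l k)
        (fun k => by
          split_ifs with h h'
          · exact absurd (h.symm.trans h') hk₀
          · have := hl k; omega
          · exact Nat.zero_le _
          · exact Nat.zero_le _)
        (fun k => by split_ifs with h <;> [exact le_of_lt hlt; exact le_refl _])
        (fun k => by split_ifs with h <;> [exact h ▸ le_of_lt hp₂; exact le_refl _])
        (fun i₀ hi₀ => by
          cases hi₀
          refine ⟨?_, by simp, by have := hl k₀; omega⟩
          intro hDm
          rcases mem_pairD (show 0 < l k₀ by have := hl k₀; omega) hp₁ hp₂ hDm with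
            ⟨hi, -⟩ | ⟨hi, -⟩ <;> exact hk₀ hi)
        (fun i j haj hjl hj1 hj2 hDm => by
          rcases mem_pairD hjl hp₁ hp₂ hDm with ⟨rfl, rfl⟩ | ⟨rfl, rfl⟩
          · rw [if_pos rfl] at hj1; exact hj1 rfl
          · rw [if_pos rfl] at hj2; exact hj2 rfl))
      simp only [Option.elim]
      rw [sum_split2 (fun i => l i / 2) hk₀.symm, sum_split2 _ hk₀.symm]
      have hco : ∀ k ∈ (Finset.univ.erase i₁).erase k₀,
          ((if k = i₁ then (p₁:ℕ) else l k) - (if k = k₀ then 1 else 0))/2 +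
            ((if k = i₁ then (p₂:ℕ) else l k) - (if k = i₁ then p₁ else l k))/2 +
            (l k - (if k = i₁ then p₂ else l k))/2 = l k / 2 := by
        intro k hk
        rw [Finset.mem_erase, Finset.mem_erase] at hk
        simp [hk.1, hk.2.1]
      rw [Finset.sum_congr rfl hco]
      simp only [if_true, eq_self_iff_true, if_neg hk₀, if_neg hk₀.symm]
      have := hl k₀
      omega

lemma UB1 (l : Fin p → ℕ) (hl : ∀ i, 2 ≤ l i) (D : Set (Sym2 (SpV p l))) (i_e : Fin p)
    (he : l i_e % 2 = 0) (hD : edgeAt l i_e 1 ∈ D) :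
    matchingNumber ((spider p l).deleteEdges D) ≤ ∑ i, l i / 2 := by
  refine le_trans (master_ub l D (fun k => if k = i_e then 2 else 1)
    (fun k => by split_ifs <;> omega)
    (fun i j hj0 hjs => by
      split_ifs at hjs with h
      · have : j = 1 := by omega
        subst this
        exact h ▸ hD
      · omega)) ?_
  rw [sum_split (fun i => l i / 2) i_e, sum_split _ i_e]
  have hco : ∀ k ∈ Finset.univ.erase i_e,
      (l k + 1 - (if k = i_e then 2 else 1))/2 = l k / 2 := by
    intro k hk
    simp [(Finset.mem_erase.mp hk).1]
  rw [Finset.sum_congr rfl hco]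
  simp only [if_true, eq_self_iff_true]
  have := hl i_e
  omega

lemma UB2 (l : Fin p → ℕ) (hl : ∀ i, 2 ≤ l i) (D : Set (Sym2 (SpV p l))) (i_e i_f : Fin p)
    (hef : i_e ≠ i_f) (he : l i_e % 2 = 0) (hf : l i_f % 2 = 0)
    (hDe : edgeAt l i_e 1 ∈ D) (hDf : edgeAt l i_f 1 ∈ D) :
    matchingNumber ((spider p l).deleteEdges D) + 1 ≤ ∑ i, l i / 2 := by
  have hub := master_ub l D (fun k => if k = i_e ∨ k = i_f then 2 else 1)
    (fun k => by split_ifs <;> omega)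
    (fun i j hj0 hjs => by
      split_ifs at hjs with h
      · have : j = 1 := by omega
        subst this
        rcases h with h | h
        · exact h ▸ hDe
        · exact h ▸ hDf
      · omega)
  refine le_trans (Nat.add_le_add_right hub 1) ?_
  rw [sum_split2 (fun i => l i / 2) hef, sum_split2 _ hef]
  have hco : ∀ k ∈ (Finset.univ.erase i_e).erase i_f,
      (l k + 1 - (if k = i_e ∨ k = i_f then 2 else 1))/2 = l k / 2 := by
    intro k hk
    rw [Finset.mem_erase, Finset.mem_erase] at hk
    simp [hk.1, hk.2.1]
  rw [Finset.sum_congr rfl hco]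
  simp only [if_true, eq_self_iff_true, true_or, or_true]
  have h1 := hl i_e
  have h2 := hl i_f
  omega

lemma UB3 (l : Fin p → ℕ) (hl : ∀ i, 2 ≤ l i) (D : Set (Sym2 (SpV p l))) (i₀ : Fin p)
    (hD1 : edgeAt l i₀ 1 ∈ D) (hD2 : edgeAt l i₀ 2 ∈ D) :
    matchingNumber ((spider p l).deleteEdges D) ≤ ∑ i, l i / 2 := by
  refine le_trans (master_ub l D (fun k => if k = i₀ then 3 else 1)
    (fun k => by split_ifs <;> omega)
    (fun i j hj0 hjs => by
      split_ifs at hjs with h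
      · subst h
        interval_cases j
        · exact hD1
        · exact hD2
      · omega)) ?_
  rw [sum_split (fun i => l i / 2) i₀, sum_split _ i₀]
  have hco : ∀ k ∈ Finset.univ.erase i₀,
      (l k + 1 - (if k = i₀ then 3 else 1))/2 = l k / 2 := by
    intro k hk
    simp [(Finset.mem_erase.mp hk).1]
  rw [Finset.sum_congr rfl hco]
  simp only [if_true, eq_self_iff_true]
  have := hl i₀
  omega

end SpiderAux

open SpiderAux

/-- **Observation 1.** Let `T` be a spider with `p ≥ 2` legs, each of length at least 2. Then
`min{ν(T - e₁ - e₂) : e₁ ≠ e₂ edges of T} ≤ min{ν(T - e) : e an edge of T}`, with equality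
if and only if `T` has exactly one leg of even length. -/
theorem spider_min_matching_two_deleted (p : ℕ) (hp : 2 ≤ p) (l : Fin p → ℕ)
    (hl : ∀ i, 2 ≤ l i) :
    sInf {m | ∃ e₁ ∈ (spider p l).edgeSet, ∃ e₂ ∈ (spider p l).edgeSet, e₁ ≠ e₂ ∧
        matchingNumber ((spider p l).deleteEdges {e₁, e₂}) = m} ≤
      sInf {m | ∃ e ∈ (spider p l).edgeSet,
        matchingNumber ((spider p l).deleteEdges {e}) = m} ∧
    (sInf {m | ∃ e₁ ∈ (spider p l).edgeSet, ∃ e₂ ∈ (spider p l).edgeSet, e₁ ≠ e₂ ∧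
        matchingNumber ((spider p l).deleteEdges {e₁, e₂}) = m} =
      sInf {m | ∃ e ∈ (spider p l).edgeSet,
        matchingNumber ((spider p l).deleteEdges {e}) = m} ↔
      (Finset.univ.filter fun i => Even (l i)).card = 1) := by
  set A := {m | ∃ e₁ ∈ (spider p l).edgeSet, ∃ e₂ ∈ (spider p l).edgeSet, e₁ ≠ e₂ ∧
      matchingNumber ((spider p l).deleteEdges {e₁, e₂}) = m} with hA
  set B := {m | ∃ e ∈ (spider p l).edgeSet,
      matchingNumber ((spider p l).deleteEdges {e}) = m} with hB
  set S := ∑ i, l i / 2 with hS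
  have z : Fin p := ⟨0, by omega⟩
  have hAne : A.Nonempty := by
    refine ⟨_, edgeAt l z 0, edgeAt_mem (by have := hl z; omega),
      edgeAt l z 1, edgeAt_mem (by have := hl z; omega), ?_, rfl⟩
    intro h
    have := edgeAt_inj (show 0 < l z by have := hl z; omega)
      (show 1 < l z by have := hl z; omega) h
    omega
  -- a generic pair witness giving value ≤ S
  have hASle : sInf A ≤ S := by
    by_cases hex : ∃ i_e, l i_e % 2 = 0
    · obtain ⟨i_e, he⟩ := hex
      have hk₀ : ∃ k₀ : Fin p, k₀ ≠ i_e := by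
        by_cases h : i_e = ⟨0, by omega⟩
        · exact ⟨⟨1, by omega⟩, by simp [h, Fin.ext_iff]⟩
        · exact ⟨⟨0, by omega⟩, fun hc => h hc.symm⟩
      obtain ⟨k₀, hk₀⟩ := hk₀
      have hne : edgeAt l i_e 1 ≠ edgeAt l k₀ 0 := by
        intro h
        exact hk₀ (edgeAt_inj (by have := hl i_e; omega) (by have := hl k₀; omega) h).1.symm
      have hmem : matchingNumber ((spider p l).deleteEdges {edgeAt l i_e 1, edgeAt l k₀ 0}) ∈ A :=
        ⟨edgeAt l i_e 1, edgeAt_mem (by have := hl i_e; omega),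
         edgeAt l k₀ 0, edgeAt_mem (by have := hl k₀; omega), hne, rfl⟩
      exact le_trans (Nat.sInf_le hmem)
        (UB1 l hl _ i_e he (Set.mem_insert _ _))
    · push_neg at hex
      have h3 : 3 ≤ l z := by have h1 := hl z; have h2 := hex z; omega
      have hne : edgeAt l z 1 ≠ edgeAt l z 2 := by
        intro h
        have := edgeAt_inj (by omega) (by omega) h
        omega
      have hmem : matchingNumber ((spider p l).deleteEdges {edgeAt l z 1, edgeAt l z 2}) ∈ A :=
        ⟨edgeAt l z 1, edgeAt_mem (by omega), edgeAt l z 2, edgeAt_mem (by omega), hne, rfl⟩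
      exact le_trans (Nat.sInf_le hmem)
        (UB3 l hl _ z (Set.mem_insert _ _) (Set.mem_insert_iff.mpr (Or.inr rfl)))
  have hBne : B.Nonempty :=
    ⟨_, ⟨edgeAt l z 0, edgeAt_mem (by have := hl z; omega), rfl⟩⟩
  have hSBle : S ≤ sInf B := by
    obtain ⟨e, he, hm⟩ := Nat.sInf_mem hBne
    obtain ⟨i, j, hj, rfl⟩ := edgeAt_classify he
    rw [← hm]
    exact L1 l hl i j hj
  refine ⟨hASle.trans hSBle, ?_, ?_⟩
  · -- equality → exactly one even leg
    intro heq
    by_contra hcard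
    rcases Nat.lt_trichotomy ((Finset.univ.filter fun i => Even (l i)).card) 1 with hc | hc | hc
    · -- no even legs: all odd
      have hall : ∀ i, l i % 2 = 1 := by
        intro i
        have h0 : (Finset.univ.filter fun i => Even (l i)).card = 0 := by omega
        rw [Finset.card_eq_zero] at h0
        have : i ∉ Finset.univ.filter fun i => Even (l i) := by rw [h0]; exact Finset.notMem_empty i
        rw [Finset.mem_filter] at this
        push_neg at this
        have := this (Finset.mem_univ i)
        rw [Nat.even_iff] at this
        omega
      have hBS1 : S + 1 ≤ sInf B := by
        obtain ⟨e, he, hm⟩ := Nat.sInf_mem hBne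
        obtain ⟨i, j, hj, rfl⟩ := edgeAt_classify he
        rw [← hm]
        exact L1' hp l hl hall i j hj
      omega
    · exact hcard hc
    · -- at least two even legs
      rw [Finset.one_lt_card] at hc
      obtain ⟨a, ha, b, hb, hab⟩ := hc
      rw [Finset.mem_filter, Nat.even_iff] at ha hb
      have hne : edgeAt l a 1 ≠ edgeAt l b 1 := by
        intro h
        exact hab (edgeAt_inj (by have := hl a; omega) (by have := hl b; omega) h).1
      have hmem : matchingNumber ((spider p l).deleteEdges {edgeAt l a 1, edgeAt l b 1}) ∈ A :=
        ⟨edgeAt l a 1, edgeAt_mem (by have := hl a; omega),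
         edgeAt l b 1, edgeAt_mem (by have := hl b; omega), hne, rfl⟩
      have hub := UB2 l hl {edgeAt l a 1, edgeAt l b 1} a b hab ha.2 hb.2
        (Set.mem_insert _ _) (Set.mem_insert_iff.mpr (Or.inr rfl))
      have := Nat.sInf_le hmem
      omega
  · -- exactly one even leg → equality
    intro hcard
    rw [Finset.card_eq_one] at hcard
    obtain ⟨i_e, hie⟩ := hcard
    have heven : ∀ k, l k % 2 = 0 ↔ k = i_e := by
      intro k
      rw [← Nat.even_iff]
      constructor
      · intro h
        have : k ∈ Finset.univ.filter fun i => Even (l i) := Finset.mem_filter.mpr ⟨Finset.mem_univ _, h⟩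
        rw [hie, Finset.mem_singleton] at this
        exact this
      · intro hkie
        have hmem : i_e ∈ Finset.univ.filter fun i => Even (l i) := by
          rw [hie]; exact Finset.mem_singleton_self _
        rw [hkie]
        exact (Finset.mem_filter.mp hmem).2
    have he : l i_e % 2 = 0 := (heven i_e).mpr rfl
    have hodd : ∀ k, k ≠ i_e → l k % 2 = 1 := by
      intro k hk
      have h2 : ¬ l k % 2 = 0 := fun h0 => hk ((heven k).mp h0)
      omega
    have hBle : sInf B ≤ S := by
      refine le_trans (Nat.sInf_le ⟨edgeAt l i_e 1,
        edgeAt_mem (by have := hl i_e; omega), rfl⟩) ?_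
      exact UB1 l hl {edgeAt l i_e 1} i_e he rfl
    have hSA : S ≤ sInf A := by
      obtain ⟨e₁, he₁, e₂, he₂, hne, hm⟩ := Nat.sInf_mem hAne
      obtain ⟨i₁, p₁, hp₁, rfl⟩ := edgeAt_classify he₁
      obtain ⟨i₂, p₂, hp₂, rfl⟩ := edgeAt_classify he₂
      rw [← hm]
      by_cases hii : i₁ = i₂
      · subst hii
        have hpp : p₁ ≠ p₂ := fun h => hne (by rw [h])
        have hcore : l i₁ % 2 = 1 ∨ ∃ k₀, k₀ ≠ i₁ ∧ l k₀ % 2 = 1 := by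
          by_cases h1 : i₁ = i_e
          · right
            have hk₀ : ∃ k₀ : Fin p, k₀ ≠ i₁ := by
              by_cases h : i₁ = ⟨0, by omega⟩
              · exact ⟨⟨1, by omega⟩, by simp [h, Fin.ext_iff]⟩
              · exact ⟨⟨0, by omega⟩, fun hc => h hc.symm⟩
            obtain ⟨k₀, hk₀⟩ := hk₀
            exact ⟨k₀, hk₀, hodd k₀ (fun hc => hk₀ (hc.trans h1.symm))⟩
          · exact Or.inl (hodd i₁ h1)
        rcases lt_or_gt_of_ne hpp with h | h
        · exact L2same l hl h hp₂ (Or.inr hcore)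
        · rw [Set.pair_comm]
          exact L2same l hl h hp₁ (Or.inr hcore)
      · refine L2diff l hl hii hp₁ hp₂ ?_
        intro h1
        exact hodd i₂ (fun h2 => hii (((heven i₁).mp h1).trans h2.symm))
    exact le_antisymm (hASle.trans hSBle) (hBle.trans hSA)
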